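/- Let w1 > 0 be an integer and let Q_{w1} := conv((0,0), (0,w1), (w1/2, w1/2)) ⊂ ℝ². The map sending a lattice point (x1, x2) ∈ Q_{w1} ∩ ℤ² to the four-point multiset {0, x1, x2, w1} in ℤ is a bijection onto the set of affine equivalence classes of four-point multisets in ℤ of width w1. In particular, the number of such equivalence classes is w1²/4 + w1 + 1 if w1 is even and w1²/4 + w1 + 3/4 if w1 is odd. -/

import Mathlib

open scoped Pointwise

noncomputable section

/-- Embed an integer lattice point into real space. -/
def intEmbed {d : ℕ} (v : Fin d → ℤ) : Fin d → ℝ := fun i => (v i : ℝ)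

/-- Pairing of an integer dual vector with a real point. -/
def dualPair {d : ℕ} (u : Fin d → ℤ) (x : Fin d → ℝ) : ℝ := ∑ i, (u i : ℝ) * x i

/-- The width of a set `P ⊆ ℝ^d` with respect to an integer dual vector `u`:
`max_{x ∈ P} u·x − min_{x ∈ P} u·x`. -/
def widthIn {d : ℕ} (u : Fin d → ℤ) (P : Set (Fin d → ℝ)) : ℝ :=
  sSup (dualPair u '' P) - sInf (dualPair u '' P)

/-- `w` is a tuple of widths of `P` realized by linearly independent dual vectors. -/
def IsWidthTuple {d : ℕ} (P : Set (Fin d → ℝ)) (w : Fin d → ℝ) : Prop :=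
  ∃ u : Fin d → (Fin d → ℤ), LinearIndependent ℤ u ∧ ∀ i, widthIn (u i) P = w i

/-- `w` is the multi-width of `P`: the lexicographically minimal width tuple over
linearly independent tuples of dual vectors. -/
def IsMultiWidth {d : ℕ} (P : Set (Fin d → ℝ)) (w : Fin d → ℝ) : Prop :=
  IsWidthTuple P w ∧ ∀ w' : Fin d → ℝ, IsWidthTuple P w' → toLex w ≤ toLex w'

/-- The affine map `x ↦ A x + b` on real points, with integral `A` and `b`. -/
def unimodMap {d : ℕ} (A : Matrix (Fin d) (Fin d) ℤ) (b : Fin d → ℤ) (x : Fin d → ℝ) :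
    Fin d → ℝ :=
  fun i => (∑ j, (A i j : ℝ) * x j) + (b i : ℝ)

/-- Affine unimodular equivalence of subsets of `ℝ^d`: `Q = A·P + b` with `A ∈ GL_d(ℤ)`,
`b ∈ ℤ^d`. -/
def AffEquiv {d : ℕ} (P Q : Set (Fin d → ℝ)) : Prop :=
  ∃ A : Matrix (Fin d) (Fin d) ℤ, IsUnit A.det ∧ ∃ b : Fin d → ℤ, Q = unimodMap A b '' P

/-- A lattice polytope: the convex hull of finitely many lattice points. -/
def IsLatticePolytope {d : ℕ} (P : Set (Fin d → ℝ)) : Prop :=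
  ∃ V : Finset (Fin d → ℤ), V.Nonempty ∧ P = convexHull ℝ (intEmbed '' (V : Set (Fin d → ℤ)))

/-- A lattice tetrahedron: the convex hull of 4 affinely independent lattice points in `ℝ³`. -/
def IsLatticeTetrahedron (P : Set (Fin 3 → ℝ)) : Prop :=
  ∃ v : Fin 4 → (Fin 3 → ℤ), AffineIndependent ℝ (fun i => intEmbed (v i)) ∧
    P = convexHull ℝ (Set.range fun i => intEmbed (v i))

/-- The type of affine equivalence classes of lattice tetrahedra with multi-width `w`. -/
def TetClasses (w : Fin 3 → ℝ) : Type :=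
  Quot fun P Q : {P : Set (Fin 3 → ℝ) // IsLatticeTetrahedron P ∧ IsMultiWidth P w} =>
    AffEquiv P.1 Q.1

/-- The real points of a multiset of lattice points. -/
def msetPts {d : ℕ} (S : Multiset (Fin d → ℤ)) : Set (Fin d → ℝ) :=
  intEmbed '' {v | v ∈ S}

/-- The convex hull of a multiset of lattice points. -/
def msetHull {d : ℕ} (S : Multiset (Fin d → ℤ)) : Set (Fin d → ℝ) :=
  convexHull ℝ (msetPts S)

/-- Affine unimodular equivalence of multisets of lattice points. -/
def MsetEquiv {d : ℕ} (S T : Multiset (Fin d → ℤ)) : Prop :=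
  ∃ A : Matrix (Fin d) (Fin d) ℤ, IsUnit A.det ∧ ∃ b : Fin d → ℤ,
    S.map (fun v => A.mulVec v + b) = T

/-- Affine unimodular equivalence of multisets of integers (`d = 1`). -/
def MsetEquivZ (S T : Multiset ℤ) : Prop :=
  ∃ a : ℤ, IsUnit a ∧ ∃ b : ℤ, S.map (fun x => a * x + b) = T

/-- The width of a multiset of integers (the width of its convex hull). -/
def widthZ (S : Multiset ℤ) : ℝ :=
  sSup ((fun n : ℤ => (n : ℝ)) '' {n | n ∈ S}) - sInf ((fun n : ℤ => (n : ℝ)) '' {n | n ∈ S})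

/-- `S` has a dual vector `u` of width `w1` whose image multiset `u·S` is affine
equivalent in `ℤ` to the multiset `L`. -/
def HasLineType (w1 : ℤ) (L : Multiset ℤ) (S : Multiset (Fin 2 → ℤ)) : Prop :=
  ∃ u : Fin 2 → ℤ, widthIn u (msetHull S) = (w1 : ℝ) ∧
    MsetEquivZ (S.map fun v => ∑ i, u i * v i) L

/-- The triangle `Q_{w₁} = conv((0,0), (0,w₁), (w₁/2, w₁/2)) ⊆ ℝ²`. -/
def QTriangle (w1 : ℤ) : Set (Fin 2 → ℝ) :=
  convexHull ℝ ({![0, 0], ![0, (w1 : ℝ)], ![(w1 : ℝ) / 2, (w1 : ℝ) / 2]} : Set (Fin 2 → ℝ))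

/-! ### Auxiliary lemmas -/

lemma widthZ_quad {a b c d : ℤ} (h1 : a ≤ b) (h2 : b ≤ c) (h3 : c ≤ d) :
    widthZ ({a,b,c,d} : Multiset ℤ) = ((d : ℝ) - a) := by
  have hset : {n : ℤ | n ∈ ({a,b,c,d} : Multiset ℤ)} = {a,b,c,d} := by ext n; simp
  have himg : ((fun n : ℤ => (n : ℝ)) '' ({a,b,c,d} : Set ℤ))
      = ({(a:ℝ), (b:ℝ), (c:ℝ), (d:ℝ)} : Set ℝ) := by
    simp [Set.image_insert_eq]
  have hsup : sSup (((fun n : ℤ => (n : ℝ)) '' {n | n ∈ ({a,b,c,d} : Multiset ℤ)})) = (d:ℝ) := by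
    rw [hset, himg]
    apply IsGreatest.csSup_eq
    constructor
    · simp
    · rintro x hx
      simp only [Set.mem_insert_iff, Set.mem_singleton_iff] at hx
      rcases hx with h|h|h|h <;> subst h <;> exact_mod_cast by omega
  have hinf : sInf (((fun n : ℤ => (n : ℝ)) '' {n | n ∈ ({a,b,c,d} : Multiset ℤ)})) = (a:ℝ) := by
    rw [hset, himg]
    apply IsLeast.csInf_eq
    constructor
    · simp
    · rintro x hx
      simp only [Set.mem_insert_iff, Set.mem_singleton_iff] at hx
      rcases hx with h|h|h|h <;> subst h <;> exact_mod_cast by omega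
  rw [widthZ, hsup, hinf]

lemma quad_rev (a b c d : ℤ) : ({a,b,c,d} : Multiset ℤ) = {d,c,b,a} := by
  have h : ([d,c,b,a] : List ℤ).Perm [a,b,c,d] := by
    have := List.reverse_perm [a,b,c,d]
    simpa using this
  have : (([d,c,b,a] : List ℤ) : Multiset ℤ) = (([a,b,c,d] : List ℤ) : Multiset ℤ) :=
    Multiset.coe_eq_coe.mpr h
  exact this.symm

lemma exists_sorted (S : Multiset ℤ) (h : Multiset.card S = 4) :
    ∃ a b c d : ℤ, a ≤ b ∧ b ≤ c ∧ c ≤ d ∧ S = {a, b, c, d} := by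
  set l := S.sort (· ≤ ·) with hl
  have hlen : l.length = 4 := by rw [hl, Multiset.length_sort]; exact h
  have hsort : l.Pairwise (· ≤ ·) := Multiset.pairwise_sort _ _
  have hco : (l : Multiset ℤ) = S := Multiset.sort_eq _ _
  match l, hlen, hsort, hco with
  | [a,b,c,d], _, hsort, hco =>
    refine ⟨a,b,c,d, ?_, ?_, ?_, ?_⟩
    · simp [List.pairwise_cons] at hsort; omega
    · simp [List.pairwise_cons] at hsort; omega
    · simp [List.pairwise_cons] at hsort; omega
    · exact hco.symm

lemma sorted_quad_eq {a b c d a' b' c' d' : ℤ} (h1 : a ≤ b) (h2 : b ≤ c) (h3 : c ≤ d)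
    (h1' : a' ≤ b') (h2' : b' ≤ c') (h3' : c' ≤ d')
    (h : ({a,b,c,d} : Multiset ℤ) = {a',b',c',d'}) :
    a = a' ∧ b = b' ∧ c = c' ∧ d = d' := by
  have hl : ([a,b,c,d] : List ℤ) = [a',b',c',d'] := by
    have hs1 : ([a,b,c,d] : List ℤ).Pairwise (· ≤ ·) := by simp [List.pairwise_cons]; omega
    have hs2 : ([a',b',c',d'] : List ℤ).Pairwise (· ≤ ·) := by simp [List.pairwise_cons]; omega
    exact List.Perm.eq_of_pairwise' hs1 hs2 (Multiset.coe_eq_coe.mp h)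
  simp at hl
  exact ⟨hl.1, hl.2.1, hl.2.2.1, hl.2.2.2⟩

lemma msetEquivZ_equiv : Equivalence MsetEquivZ := by
  constructor
  · intro S; exact ⟨1, isUnit_one, 0, by simp⟩
  · rintro S T ⟨a, ha, b, h⟩
    rcases Int.isUnit_iff.mp ha with rfl | rfl
    · refine ⟨1, isUnit_one, -b, ?_⟩
      subst h; rw [Multiset.map_map]
      have : ((fun x => (1:ℤ) * x + -b) ∘ fun x => 1 * x + b) = id := by funext x; simp
      rw [this, Multiset.map_id]
    · refine ⟨-1, ha, b, ?_⟩
      subst h; rw [Multiset.map_map]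
      have : ((fun x => (-1:ℤ) * x + b) ∘ fun x => -1 * x + b) = id := by funext x; simp
      rw [this, Multiset.map_id]
  · rintro S T U ⟨a, ha, b, h⟩ ⟨a', ha', b', h'⟩
    refine ⟨a' * a, ha'.mul ha, a' * b + b', ?_⟩
    subst h; subst h'
    rw [Multiset.map_map]
    congr 1
    funext x; simp; ring

lemma memQ_iff (w1 : ℤ) (hw1 : 0 < w1) (p : Fin 2 → ℤ) :
    intEmbed p ∈ QTriangle w1 ↔ 0 ≤ p 0 ∧ p 0 ≤ p 1 ∧ p 0 + p 1 ≤ w1 := by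
  have hw1R : (0:ℝ) < (w1:ℝ) := by exact_mod_cast hw1
  constructor
  · intro hmem
    have hconv : Convex ℝ {x : Fin 2 → ℝ | 0 ≤ x 0 ∧ x 0 ≤ x 1 ∧ x 0 + x 1 ≤ (w1:ℝ)} := by
      rintro x ⟨hx1, hx2, hx3⟩ y ⟨hy1, hy2, hy3⟩ a b ha hb hab
      refine ⟨?_, ?_, ?_⟩ <;> simp only [Pi.add_apply, Pi.smul_apply, smul_eq_mul] <;> nlinarith
    have hsub : QTriangle w1 ⊆ {x : Fin 2 → ℝ | 0 ≤ x 0 ∧ x 0 ≤ x 1 ∧ x 0 + x 1 ≤ (w1:ℝ)} := by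
      apply convexHull_min _ hconv
      rintro x (rfl | rfl | rfl) <;>
        refine ⟨?_, ?_, ?_⟩ <;> simp <;> linarith
    have := hsub hmem
    simp only [Set.mem_setOf_eq, intEmbed] at this
    exact ⟨by exact_mod_cast this.1, by exact_mod_cast this.2.1, by exact_mod_cast this.2.2⟩
  · rintro ⟨h1, h2, h3⟩
    obtain ⟨x, y, hx, hy⟩ : ∃ x y : ℝ, x = (p 0 : ℝ) ∧ y = (p 1 : ℝ) := ⟨_, _, rfl, rfl⟩
    have hx0 : (0:ℝ) ≤ x := by rw [hx]; exact_mod_cast h1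
    have hxy : x ≤ y := by rw [hx, hy]; exact_mod_cast h2
    have hsum : x + y ≤ (w1:ℝ) := by rw [hx, hy]; exact_mod_cast h3
    set w : Fin 3 → ℝ := ![((w1:ℝ) - x - y)/w1, (y - x)/w1, 2*x/w1] with hw
    set z : Fin 3 → (Fin 2 → ℝ) := ![![0, 0], ![0, (w1 : ℝ)], ![(w1 : ℝ) / 2, (w1 : ℝ) / 2]] with hz
    have hwsum : ∑ i, w i = 1 := by
      rw [hw]
      simp only [Fin.sum_univ_three, Matrix.cons_val_zero, Matrix.cons_val_one, Matrix.head_cons,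
        Matrix.cons_val_two, Matrix.tail_cons]
      field_simp
      ring
    have hwpos : ∀ i ∈ (Finset.univ : Finset (Fin 3)), 0 ≤ w i := by
      intro i _
      fin_cases i <;> simp only [hw, Matrix.cons_val_zero, Matrix.cons_val_one, Matrix.head_cons,
        Matrix.cons_val_two, Matrix.tail_cons, Fin.isValue] <;> apply div_nonneg <;> linarith
    have hcm := Finset.centerMass_mem_convexHull (Finset.univ : Finset (Fin 3)) hwpos
      (by rw [hwsum]; norm_num)
      (fun i _ => show z i ∈ ({![0, 0], ![0, (w1 : ℝ)], ![(w1 : ℝ) / 2, (w1 : ℝ) / 2]} : Set (Fin 2 → ℝ)) by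
        fin_cases i <;> simp [hz])
    have hcmeq : (Finset.univ : Finset (Fin 3)).centerMass w z = intEmbed p := by
      rw [Finset.centerMass_eq_of_sum_1 _ _ hwsum]
      funext j
      fin_cases j <;>
        · simp only [hz, hw, Fin.sum_univ_three, intEmbed, Finset.centerMass, Matrix.cons_val_zero,
            Matrix.cons_val_one, Matrix.head_cons, Matrix.cons_val_two, Matrix.tail_cons,
            Pi.add_apply, Pi.smul_apply, smul_eq_mul]
          simp only [Fin.mk_zero, Fin.mk_one, Matrix.cons_val_zero, Matrix.cons_val_one,
            Matrix.head_cons]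
          try rw [← hx]
          try rw [← hy]
          field_simp
          try ring
    rw [QTriangle]
    rw [hcmeq] at hcm
    exact hcm

lemma sumOdds (m : ℕ) : ∑ a ∈ Finset.range m, (2*a+1) = m^2 := by
  induction m with
  | zero => simp
  | succ k ih => rw [Finset.sum_range_succ, ih]; ring

lemma sumEvens (m : ℕ) : ∑ a ∈ Finset.range m, (2*a+2) = m^2 + m := by
  induction m with
  | zero => simp
  | succ k ih => rw [Finset.sum_range_succ, ih]; ring

lemma count_even (M : ℕ) : ∑ a ∈ Finset.range (M+1), (2*M - a + 1 - a) = (M+1)^2 := by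
  have h := Finset.sum_range_reflect (fun a => 2*M - a + 1 - a) (M+1)
  rw [← h, ← sumOdds (M+1)]
  apply Finset.sum_congr rfl
  intro a ha
  simp only [Finset.mem_range] at ha
  omega

lemma count_odd (M : ℕ) : ∑ a ∈ Finset.range (M+1), (2*M+1 - a + 1 - a) = (M+1)^2 + (M+1) := by
  have h := Finset.sum_range_reflect (fun a => 2*M+1 - a + 1 - a) (M+1)
  rw [← h, ← sumEvens (M+1)]
  apply Finset.sum_congr rfl
  intro a ha
  simp only [Finset.mem_range] at ha
  omega

lemma part1 (w1 : ℤ) (hw1 : 0 < w1) : ∀ p : Fin 2 → ℤ, intEmbed p ∈ QTriangle w1 →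
    widthZ ({0, p 0, p 1, w1} : Multiset ℤ) = (w1 : ℝ) := by
  intro p hp
  rw [memQ_iff w1 hw1] at hp
  obtain ⟨h1, h2, h3⟩ := hp
  have := widthZ_quad (a := 0) (b := p 0) (c := p 1) (d := w1) h1 h2 (by omega)
  simpa using this

lemma part2 (w1 : ℤ) (hw1 : 0 < w1) : ∀ S : Multiset ℤ, Multiset.card S = 4 →
    widthZ S = (w1 : ℝ) →
    ∃ p : Fin 2 → ℤ, intEmbed p ∈ QTriangle w1 ∧
      MsetEquivZ ({0, p 0, p 1, w1} : Multiset ℤ) S := by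
  intro S hcard hw
  obtain ⟨a, b, c, d, hab, hbc, hcd, hS⟩ := exists_sorted S hcard
  subst hS
  rw [widthZ_quad hab hbc hcd] at hw
  have hda : d - a = w1 := by
    exact_mod_cast (show ((d - a : ℤ) : ℝ) = ((w1:ℤ):ℝ) by push_cast; linarith)
  by_cases hcase : (b - a) + (c - a) ≤ w1
  · refine ⟨![b - a, c - a], ?_, ?_⟩
    · rw [memQ_iff w1 hw1]
      refine ⟨?_, ?_, ?_⟩ <;>
        simp only [Matrix.cons_val_zero, Matrix.cons_val_one, Matrix.head_cons] <;> omega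
    · refine ⟨1, isUnit_one, a, ?_⟩
      have hv0 : (![b - a, c - a] : Fin 2 → ℤ) 0 = b - a := rfl
      have hv1 : (![b - a, c - a] : Fin 2 → ℤ) 1 = c - a := rfl
      rw [hv0, hv1]
      simp only [Multiset.insert_eq_cons, Multiset.map_cons, Multiset.map_singleton]
      rw [show (1:ℤ)*0 + a = a by ring, show (1:ℤ)*(b-a) + a = b by ring,
        show (1:ℤ)*(c-a) + a = c by ring, show (1:ℤ)*w1 + a = d by omega]
  · refine ⟨![d - c, d - b], ?_, ?_⟩
    · rw [memQ_iff w1 hw1]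
      refine ⟨?_, ?_, ?_⟩ <;>
        simp only [Matrix.cons_val_zero, Matrix.cons_val_one, Matrix.head_cons] <;> omega
    · refine ⟨-1, isUnit_one.neg, d, ?_⟩
      have hv0 : (![d - c, d - b] : Fin 2 → ℤ) 0 = d - c := rfl
      have hv1 : (![d - c, d - b] : Fin 2 → ℤ) 1 = d - b := rfl
      rw [hv0, hv1]
      simp only [Multiset.insert_eq_cons, Multiset.map_cons, Multiset.map_singleton]
      rw [show (-1:ℤ)*0 + d = d by ring, show (-1:ℤ)*(d-c) + d = c by ring,
        show (-1:ℤ)*(d-b) + d = b by ring, show (-1:ℤ)*w1 + d = a by omega]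
      exact (quad_rev a b c d).symm

lemma quad_rev' (a b c d : ℤ) :
    (a ::ₘ b ::ₘ c ::ₘ {d} : Multiset ℤ) = d ::ₘ c ::ₘ b ::ₘ {a} := by
  have := quad_rev a b c d
  simpa [Multiset.insert_eq_cons] using this

lemma part3 (w1 : ℤ) (hw1 : 0 < w1) :
    ∀ p q : Fin 2 → ℤ, intEmbed p ∈ QTriangle w1 → intEmbed q ∈ QTriangle w1 →
      MsetEquivZ ({0, p 0, p 1, w1} : Multiset ℤ) ({0, q 0, q 1, w1} : Multiset ℤ) →
      p = q := by
  intro p q hp hq hequiv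
  rw [memQ_iff w1 hw1] at hp hq
  obtain ⟨hp1, hp2, hp3⟩ := hp
  obtain ⟨hq1, hq2, hq3⟩ := hq
  obtain ⟨u, hu, b, hmap⟩ := hequiv
  simp only [Multiset.insert_eq_cons, Multiset.map_cons, Multiset.map_singleton] at hmap
  rcases Int.isUnit_iff.mp hu with rfl | rfl
  · have h := sorted_quad_eq (by omega) (by omega) (by omega)
      (by omega) (by omega) (by omega) hmap
    obtain ⟨e1, e2, e3, e4⟩ := h
    funext i; fin_cases i
    · exact (by omega : p 0 = q 0)
    · exact (by omega : p 1 = q 1)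
  · rw [quad_rev' (-1*0+b) (-1*(p 0)+b) (-1*(p 1)+b) (-1*w1+b)] at hmap
    have h := sorted_quad_eq (by omega) (by omega) (by omega)
      (by omega) (by omega) (by omega) hmap
    obtain ⟨e1, e2, e3, e4⟩ := h
    funext i; fin_cases i
    · exact (by omega : p 0 = q 0)
    · exact (by omega : p 1 = q 1)

theorem four_point_sets_in_line (w1 : ℤ) (hw1 : 0 < w1) :
    (∀ p : Fin 2 → ℤ, intEmbed p ∈ QTriangle w1 →
        widthZ ({0, p 0, p 1, w1} : Multiset ℤ) = (w1 : ℝ)) ∧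
    (∀ S : Multiset ℤ, Multiset.card S = 4 → widthZ S = (w1 : ℝ) →
        ∃ p : Fin 2 → ℤ, intEmbed p ∈ QTriangle w1 ∧
          MsetEquivZ ({0, p 0, p 1, w1} : Multiset ℤ) S) ∧
    (∀ p q : Fin 2 → ℤ, intEmbed p ∈ QTriangle w1 → intEmbed q ∈ QTriangle w1 →
        MsetEquivZ ({0, p 0, p 1, w1} : Multiset ℤ) ({0, q 0, q 1, w1} : Multiset ℤ) →
        p = q) ∧
    ((Nat.card (Quot fun S T : {S : Multiset ℤ //
          Multiset.card S = 4 ∧ widthZ S = (w1 : ℝ)} => MsetEquivZ S.1 T.1) : ℚ) =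
      if Even w1 then (w1 : ℚ) ^ 2 / 4 + w1 + 1 else (w1 : ℚ) ^ 2 / 4 + w1 + 3 / 4) := by
  refine ⟨part1 w1 hw1, part2 w1 hw1, part3 w1 hw1, ?_⟩
  have hrequiv : Equivalence (fun S T : {S : Multiset ℤ //
      Multiset.card S = 4 ∧ widthZ S = (w1 : ℝ)} => MsetEquivZ S.1 T.1) :=
    ⟨fun S => msetEquivZ_equiv.refl S.1, fun h => msetEquivZ_equiv.symm h,
      fun h h' => msetEquivZ_equiv.trans h h'⟩
  have hcard4 : ∀ x y : ℤ, Multiset.card ({0, x, y, w1} : Multiset ℤ) = 4 := by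
    intro x y; simp
  set L := {p : Fin 2 → ℤ // intEmbed p ∈ QTriangle w1} with hL
  let f : L → Quot (fun S T : {S : Multiset ℤ //
      Multiset.card S = 4 ∧ widthZ S = (w1 : ℝ)} => MsetEquivZ S.1 T.1) :=
    fun p => Quot.mk _ ⟨({0, p.1 0, p.1 1, w1} : Multiset ℤ),
      hcard4 _ _, part1 w1 hw1 p.1 p.2⟩
  have hfbij : Function.Bijective f := by
    constructor
    · intro p q h
      have h' := (hrequiv.eqvGen_iff).mp (Quot.eqvGen_exact h)
      exact Subtype.ext (part3 w1 hw1 p.1 q.1 p.2 q.2 h')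
    · intro qq
      obtain ⟨S, rfl⟩ := qq.exists_rep
      obtain ⟨p, hp, hpe⟩ := part2 w1 hw1 S.1 S.2.1 S.2.2
      exact ⟨⟨p, hp⟩, Quot.sound hpe⟩
  set n := w1.toNat with hn
  set Fs : Finset ((_ : ℕ) × ℕ) :=
    (Finset.range (n/2+1)).sigma (fun a => Finset.Icc a (n - a)) with hFs
  let g : L → Fs := fun p =>
    ⟨⟨(p.1 0).toNat, (p.1 1).toNat⟩, by
      have h := (memQ_iff w1 hw1 p.1).mp p.2
      simp only [hFs, Finset.mem_sigma, Finset.mem_range, Finset.mem_Icc]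
      omega⟩
  have hgbij : Function.Bijective g := by
    constructor
    · intro p q h
      have hp := (memQ_iff w1 hw1 p.1).mp p.2
      have hq := (memQ_iff w1 hw1 q.1).mp q.2
      simp only [g, Subtype.mk.injEq, Sigma.mk.inj_iff, heq_eq_eq] at h
      apply Subtype.ext; funext i; fin_cases i
      · exact (by omega : p.1 0 = q.1 0)
      · exact (by omega : p.1 1 = q.1 1)
    · rintro ⟨⟨a, b⟩, hmem⟩
      simp only [hFs, Finset.mem_sigma, Finset.mem_range, Finset.mem_Icc] at hmem
      refine ⟨⟨![(a:ℤ), (b:ℤ)], ?_⟩, ?_⟩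
      · rw [memQ_iff w1 hw1]
        refine ⟨?_, ?_, ?_⟩ <;>
          simp only [Matrix.cons_val_zero, Matrix.cons_val_one, Matrix.head_cons] <;> omega
      · simp only [g, Subtype.mk.injEq, Sigma.mk.inj_iff, heq_eq_eq,
          Matrix.cons_val_zero, Matrix.cons_val_one, Matrix.head_cons]
        constructor <;> omega
  have hcount : Nat.card (Quot (fun S T : {S : Multiset ℤ //
      Multiset.card S = 4 ∧ widthZ S = (w1 : ℝ)} => MsetEquivZ S.1 T.1)) = Fs.card := by
    rw [← Nat.card_eq_of_bijective f hfbij, Nat.card_eq_of_bijective g hgbij,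
      Nat.card_eq_finsetCard]
  have hFscard : Fs.card = ∑ a ∈ Finset.range (n/2+1), (n - a + 1 - a) := by
    rw [hFs, Finset.card_sigma]
    exact Finset.sum_congr rfl (fun a _ => by rw [Nat.card_Icc])
  rw [hcount]
  rcases Nat.even_or_odd n with ⟨M, hM⟩ | ⟨M, hM⟩
  · have hdiv : n/2 = M := by omega
    have hcnt : Fs.card = (M+1)^2 := by
      rw [hFscard, hdiv, ← count_even M]
      exact Finset.sum_congr rfl (fun a _ => by omega)
    have hEw : Even w1 := ⟨(M:ℤ), by omega⟩
    rw [hcnt, if_pos hEw]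
    have hwq : w1 = 2*(M:ℤ) := by omega
    rw [hwq]; push_cast; ring
  · have hdiv : n/2 = M := by omega
    have hcnt : Fs.card = (M+1)^2 + (M+1) := by
      rw [hFscard, hdiv, ← count_odd M]
      exact Finset.sum_congr rfl (fun a _ => by omega)
    have hOw : ¬ Even w1 := by
      rintro ⟨k, hk⟩; omega
    rw [hcnt, if_neg hOw]
    have hwq : w1 = 2*(M:ℤ)+1 := by omega
    rw [hwq]; push_cast; ring
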